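/- Let E be an elliptic curve over a local field K_v of residue characteristic not 2, with good reduction, and let F/K_v be a ramified quadratic extension. Then the quadratic twist E^F of E by F has no K_v-rational point of order 4. -/

import Mathlib

open WeierstrassCurve

/-- The quadratic twist by `d` of a Weierstrass curve `y² = x³ + a₂x² + a₄x + a₆`
(a model with `a₁ = a₃ = 0`, which exists in residue characteristic `≠ 2`):
`y² = x³ + d·a₂x² + d²·a₄x + d³·a₆`.  This is the quadratic twist of `E` by `K(√d)/K`. -/
def WeierstrassCurve.quadTwist {K : Type*} [CommRing K] (W : WeierstrassCurve K) (d : K) :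
    WeierstrassCurve K :=
  ⟨0, d * W.a₂, 0, d ^ 2 * W.a₄, d ^ 3 * W.a₆⟩

/-- `E/K` has good reduction with respect to the discrete valuation ring `R ⊆ K`: after a
change of variables over `K`, `E` comes from a Weierstrass model over `R` with unit
discriminant. -/
def HasGoodReduction (R : Type*) {K : Type*} [CommRing R] [IsDomain R]
    [IsDiscreteValuationRing R] [Field K] [Algebra R K] (E : WeierstrassCurve K) : Prop :=
  ∃ (W : WeierstrassCurve R) (C : VariableChange K),
    IsUnit W.Δ ∧ C • W.map (algebraMap R K) = E

/-- `d ∈ K` has odd valuation with respect to the discrete valuation ring `R ⊆ K`, i.e.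
`d` is a square times a uniformizer times a unit; equivalently `K(√d)/K` is a ramified
quadratic extension (when `d` is a nonsquare and the residue characteristic is odd). -/
def HasOddVal (R : Type*) {K : Type*} [CommRing R] [IsDomain R]
    [IsDiscreteValuationRing R] [Field K] [Algebra R K] (d : K) : Prop :=
  ∃ (c : K) (π : R) (u : Rˣ), c ≠ 0 ∧ Irreducible π ∧ d = c ^ 2 * algebraMap R K (π * u)

section Aux

/-- Discriminant of `y² = x³ + a₂x² + a₄x + a₆` with a rational 2-torsion `x`-coordinate `τ`. -/
lemma delta_aux {R : Type*} [CommRing R] (W : WeierstrassCurve R) (h1 : W.a₁ = 0)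
    (h3 : W.a₃ = 0) {τ : R} (hτ : τ ^ 3 + W.a₂ * τ ^ 2 + W.a₄ * τ + W.a₆ = 0) :
    W.Δ = 16 * (3 * τ ^ 2 + 2 * W.a₂ * τ + W.a₄) ^ 2
      * (W.a₂ ^ 2 - 2 * W.a₂ * τ - 3 * τ ^ 2 - 4 * W.a₄) := by
  have h6 : W.a₆ = -(τ ^ 3 + W.a₂ * τ ^ 2 + W.a₄ * τ) := by linear_combination hτ
  simp only [WeierstrassCurve.Δ, b₂, b₄, b₆, b₈, h1, h3, h6]
  ring

variable {R Kv : Type*} [CommRing R] [IsDomain R] [IsDiscreteValuationRing R]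
  [Field Kv] [Algebra R Kv] [IsFractionRing R Kv]

lemma exists_of_sq {z : Kv} {m : R} (h : z ^ 2 = algebraMap R Kv m) :
    ∃ w : R, algebraMap R Kv w = z := by
  have hint : _root_.IsIntegral R z := by
    refine ⟨Polynomial.X ^ 2 - Polynomial.C m, Polynomial.monic_X_pow_sub_C m (by norm_num), ?_⟩
    simp only [Polynomial.eval₂_sub, Polynomial.eval₂_X_pow, Polynomial.eval₂_C]
    rw [h]; ring
  exact IsIntegrallyClosed.isIntegral_iff.mp hint

lemma exists_of_cubic {z : Kv} {a b c : R}
    (h : z ^ 3 + algebraMap R Kv a * z ^ 2 + algebraMap R Kv b * z + algebraMap R Kv c = 0) :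
    ∃ w : R, algebraMap R Kv w = z := by
  have hint : _root_.IsIntegral R z := by
    refine ⟨Polynomial.X ^ 3 + Polynomial.C a * Polynomial.X ^ 2 + Polynomial.C b * Polynomial.X
      + Polynomial.C c, ?_, ?_⟩
    · monicity!
    · simp only [Polynomial.eval₂_add, Polynomial.eval₂_mul, Polynomial.eval₂_X_pow,
        Polynomial.eval₂_C, Polynomial.eval₂_X]
      exact h
  exact IsIntegrallyClosed.isIntegral_iff.mp hint

end Aux

open Classical in
/-- Let `E` be an elliptic curve over a nonarchimedean local field `K_v`
(the fraction field of a complete DVR `R`; completeness is not needed for the statement) of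
residue characteristic `≠ 2` (i.e. `2 ∈ Rˣ`), with good reduction, and let `F = K_v(√d)` be a
ramified quadratic extension (`d` a nonsquare of odd valuation). Then the quadratic twist
`E^F` of `E` by `F` has no `K_v`-rational point of order 4. -/
theorem stmt0 (R : Type*) [CommRing R] [IsDomain R] [IsDiscreteValuationRing R]
    (Kv : Type*) [Field Kv] [Algebra R Kv] [IsFractionRing R Kv]
    (h2 : IsUnit (2 : R))
    (E : WeierstrassCurve Kv) (hell : E.Δ ≠ 0) (ha₁ : E.a₁ = 0) (ha₃ : E.a₃ = 0)
    (hgood : _root_.HasGoodReduction R E)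
    (d : Kv) (hd : ¬IsSquare d) (hram : HasOddVal R d) :
    ∀ P : (E.quadTwist d).toAffine.Point, addOrderOf P ≠ 4 := by
  set W' : WeierstrassCurve.Affine Kv := (E.quadTwist d).toAffine with hW'
  intro P hP4
  have hd0 : d ≠ 0 := fun h => hd (h ▸ ⟨0, by ring⟩)
  set φ : R →+* Kv := algebraMap R Kv with hφ
  have hinj : Function.Injective φ := IsFractionRing.injective R Kv
  have h2K : (2 : Kv) ≠ 0 := by
    have : IsUnit (φ 2) := h2.map φ
    rw [map_ofNat] at this
    exact this.ne_zero
  -- twist coefficients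
  have ta1 : W'.a₁ = 0 := rfl
  have ta3 : W'.a₃ = 0 := rfl
  have ta2 : W'.a₂ = d * E.a₂ := rfl
  have ta4 : W'.a₄ = d ^ 2 * E.a₄ := rfl
  have ta6 : W'.a₆ = d ^ 3 * E.a₆ := rfl
  -- basic group facts
  have h4P : (P + P) + (P + P) = 0 := by
    have h := addOrderOf_nsmul_eq_zero P
    rw [hP4] at h
    calc (P + P) + (P + P) = (4 : ℕ) • P := by
          rw [show (4 : ℕ) = 2 + 2 from rfl, add_nsmul, two_nsmul]
      _ = 0 := h
  have hPP0 : P + P ≠ 0 := by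
    intro h0
    have h2dvd : addOrderOf P ∣ 2 := addOrderOf_dvd_of_nsmul_eq_zero (by rw [two_nsmul]; exact h0)
    rw [hP4] at h2dvd
    norm_num at h2dvd
  rcases P with _ | @⟨x, y, h⟩
  · rw [← WeierstrassCurve.Affine.Point.zero_def, addOrderOf_zero] at hP4; norm_num at hP4
  -- doubling
  have hy_ne : y ≠ W'.negY x y := by
    intro hy
    exact hPP0 (WeierstrassCurve.Affine.Point.add_self_of_Y_eq hy)
  have hyne0 : y ≠ 0 := by
    intro h0
    apply hy_ne
    rw [WeierstrassCurve.Affine.negY, ta1, ta3, h0]; ring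
  set lam : Kv := W'.slope x x y y with hlam
  set x₀ : Kv := W'.addX x x lam with hx₀
  have hPP : (WeierstrassCurve.Affine.Point.some _ _ h) + (WeierstrassCurve.Affine.Point.some _ _ h)
      = WeierstrassCurve.Affine.Point.some _ _
        (WeierstrassCurve.Affine.nonsingular_add h h fun hxy => hy_ne hxy.right) :=
    WeierstrassCurve.Affine.Point.add_self_of_Y_ne hy_ne
  rw [hPP] at h4P
  have hy₂eq : W'.addY x x y lam = W'.negY (W'.addX x x lam) (W'.addY x x y lam) := by
    by_contra hne
    rw [WeierstrassCurve.Affine.Point.add_self_of_Y_ne hne] at h4P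
    exact WeierstrassCurve.Affine.Point.some_ne_zero _ h4P
  have hy₂0 : W'.addY x x y lam = 0 := by
    have h' := hy₂eq
    rw [WeierstrassCurve.Affine.negY, ta1, ta3] at h'
    have : 2 * W'.addY x x y lam = 0 := by linear_combination h'
    exact (mul_eq_zero.mp this).resolve_left h2K
  -- curve equations
  have heqx : y ^ 2 = x ^ 3 + d * E.a₂ * x ^ 2 + d ^ 2 * E.a₄ * x + d ^ 3 * E.a₆ := by
    have he := (W'.equation_iff x y).mp h.1
    rw [ta1, ta2, ta3, ta4, ta6] at he
    linear_combination he
  have hcubic : x₀ ^ 3 + d * E.a₂ * x₀ ^ 2 + d ^ 2 * E.a₄ * x₀ + d ^ 3 * E.a₆ = 0 := by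
    have he := (W'.equation_iff _ _).mp
      (WeierstrassCurve.Affine.nonsingular_add h h fun hxy => hy_ne hxy.right).1
    rw [hy₂0, ta1, ta2, ta3, ta4, ta6] at he
    linear_combination -he
  -- slope relation
  have hden : y - W'.negY x y = 2 * y := by
    rw [WeierstrassCurve.Affine.negY, ta1, ta3]; ring
  have hlam2 : lam * (2 * y) = 3 * x ^ 2 + 2 * (d * E.a₂) * x + d ^ 2 * E.a₄ := by
    rw [hlam, WeierstrassCurve.Affine.slope_of_Y_ne rfl hy_ne, hden, ta1, ta2, ta4]
    field_simp
    ring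
  have hx₀def : x₀ = lam ^ 2 - d * E.a₂ - 2 * x := by
    rw [hx₀, WeierstrassCurve.Affine.addX, ta1, ta2]; ring
  -- the halving relation: (x - x₀)² equals F'(x₀)
  have hX : (x - x₀) ^ 2 = 3 * x₀ ^ 2 + 2 * (d * E.a₂) * x₀ + d ^ 2 * E.a₄ := by
    have h0 : ((x - x₀) ^ 2 - (3 * x₀ ^ 2 + 2 * (d * E.a₂) * x₀ + d ^ 2 * E.a₄)) ^ 2 = 0 := by
      linear_combination
        (-(2 * lam * y + (3 * x ^ 2 + 2 * (d * E.a₂) * x + d ^ 2 * E.a₄))) * hlam2 +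
        (-4 * y ^ 2) * hx₀def + (4 * (x₀ + d * E.a₂ + 2 * x)) * heqx +
        (4 * (2 * x + x₀ + d * E.a₂)) * hcubic
    have := pow_eq_zero_iff (n := 2) (by norm_num) |>.mp h0
    exact sub_eq_zero.mp this
  have hxne : x ≠ x₀ := by
    intro heq
    apply hyne0
    have hy0 : y ^ 2 = 0 := by rw [heq] at heqx; linear_combination heqx + hcubic
    exact pow_eq_zero_iff (n := 2) (by norm_num) |>.mp hy0
  -- divide out the twist parameter
  obtain ⟨t, hdt⟩ : ∃ t : Kv, d * t = x₀ := ⟨x₀ / d, by field_simp⟩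
  obtain ⟨ρ, hdρ⟩ : ∃ ρ : Kv, d * ρ = x - x₀ := ⟨(x - x₀) / d, by field_simp⟩
  have ht : t ^ 3 + E.a₂ * t ^ 2 + E.a₄ * t + E.a₆ = 0 := by
    have h3 : d ^ 3 * (t ^ 3 + E.a₂ * t ^ 2 + E.a₄ * t + E.a₆) = 0 := by
      linear_combination hcubic +
        ((d * t) ^ 2 + d * t * x₀ + x₀ ^ 2 + d * E.a₂ * (d * t + x₀) + d ^ 2 * E.a₄) * hdt
    exact (mul_eq_zero.mp h3).resolve_left (pow_ne_zero 3 hd0)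
  have hρsq : ρ ^ 2 = 3 * t ^ 2 + 2 * E.a₂ * t + E.a₄ := by
    have h3 : d ^ 2 * (ρ ^ 2 - (3 * t ^ 2 + 2 * E.a₂ * t + E.a₄)) = 0 := by
      linear_combination (d * ρ + (x - x₀)) * hdρ + hX +
        (-3 * (d * t + x₀) - 2 * d * E.a₂) * hdt
    have := (mul_eq_zero.mp h3).resolve_left (pow_ne_zero 2 hd0)
    exact sub_eq_zero.mp this
  have hρ0 : ρ ≠ 0 := by
    intro h0
    rw [h0, mul_zero] at hdρ
    exact hxne (sub_eq_zero.mp hdρ.symm)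
  have hx_eq : x = d * t + d * ρ := by linear_combination -hdρ - hdt
  have hy2' : y ^ 2 = d ^ 3 * (ρ ^ 2 * (2 * ρ + (3 * t + E.a₂))) := by
    rw [hx_eq] at heqx
    linear_combination heqx + d ^ 3 * ht - d ^ 3 * ρ * hρsq
  have hsq : IsSquare (d * (2 * ρ + (3 * t + E.a₂))) := by
    refine ⟨y / (d * ρ), ?_⟩
    rw [div_mul_div_comm, eq_div_iff (mul_ne_zero (mul_ne_zero hd0 hρ0) (mul_ne_zero hd0 hρ0))]
    linear_combination -hy2'
  -- good reduction: normalize the integral model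
  obtain ⟨W, C, hΔu, hCW⟩ := hgood
  have hi2 : (2 : R) * ↑h2.unit⁻¹ = 1 := h2.mul_val_inv
  set C₀ : VariableChange R := ⟨1, 0, -(↑h2.unit⁻¹ * W.a₁), -(↑h2.unit⁻¹ * W.a₃)⟩ with hC₀
  set W₀ : WeierstrassCurve R := C₀ • W with hW₀
  have hW₀1 : W₀.a₁ = 0 := by
    rw [hW₀, variableChange_a₁, hC₀]
    simp only [inv_one, Units.val_one, one_mul]
    linear_combination (-W.a₁) * hi2
  have hW₀3 : W₀.a₃ = 0 := by
    rw [hW₀, variableChange_a₃, hC₀]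
    simp only [inv_one, Units.val_one, one_pow, one_mul]
    linear_combination (-W.a₃) * hi2
  have hW₀Δ : IsUnit W₀.Δ := by
    rw [hW₀, variableChange_Δ, hC₀]
    simpa using hΔu
  set C₁ : VariableChange Kv := C * (C₀.map φ)⁻¹ with hC₁
  have hE : C₁ • W₀.map φ = E := by
    have h1 : W₀.map φ = (C₀.map φ) • (W.map φ) := (map_variableChange _ _ _).symm
    rw [h1, ← mul_smul]
    have h2' : C₁ * (C₀.map φ) = C := by
      show C₁ * (C₀.map φ) = C
      rw [hC₁, inv_mul_cancel_right]
    rw [h2']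
    exact hCW
  set u : Kvˣ := C₁.u with hu
  set rr : Kv := C₁.r with hrr
  have huu : (↑u : Kv) * ↑u⁻¹ = 1 := u.mul_inv
  -- extract the coefficient relations
  have h2s : 2 * C₁.s = 0 := by
    have h' := congrArg WeierstrassCurve.a₁ hE
    rw [variableChange_a₁, map_a₁, hW₀1, map_zero, ha₁] at h'
    linear_combination (↑u : Kv) * h' - (2 * C₁.s) * huu
  have hss : C₁.s = 0 := (mul_eq_zero.mp h2s).resolve_left h2K
  have h2t : 2 * C₁.t = 0 := by
    have h' := congrArg WeierstrassCurve.a₃ hE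
    rw [variableChange_a₃, map_a₃, hW₀3, map_zero, map_a₁, hW₀1, map_zero, ha₃] at h'
    linear_combination (↑u : Kv) ^ 3 * h'
      - (2 * C₁.t * ((↑u : Kv) ^ 2 * (↑u⁻¹ : Kv) ^ 2 + (↑u : Kv) * ↑u⁻¹ + 1)) * huu
  have htt : C₁.t = 0 := (mul_eq_zero.mp h2t).resolve_left h2K
  have hA : φ W₀.a₂ + 3 * rr = (↑u : Kv) ^ 2 * E.a₂ := by
    have h' := congrArg WeierstrassCurve.a₂ hE
    rw [variableChange_a₂, map_a₂, map_a₁, hW₀1, map_zero, hss] at h'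
    linear_combination (↑u : Kv) ^ 2 * h'
      - ((φ W₀.a₂ + 3 * rr) * ((↑u : Kv) * ↑u⁻¹ + 1)) * huu
  have hB : φ W₀.a₄ + 2 * rr * φ W₀.a₂ + 3 * rr ^ 2 = (↑u : Kv) ^ 4 * E.a₄ := by
    have h' := congrArg WeierstrassCurve.a₄ hE
    rw [variableChange_a₄, map_a₄, map_a₃, hW₀3, map_zero, map_a₂, map_a₁, hW₀1, map_zero,
      hss, htt] at h'
    linear_combination (↑u : Kv) ^ 4 * h'
      - ((φ W₀.a₄ + 2 * rr * φ W₀.a₂ + 3 * rr ^ 2) * ((↑u : Kv) ^ 3 * (↑u⁻¹ : Kv) ^ 3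
        + (↑u : Kv) ^ 2 * (↑u⁻¹ : Kv) ^ 2 + (↑u : Kv) * ↑u⁻¹ + 1)) * huu
  have hC6 : φ W₀.a₆ + rr * φ W₀.a₄ + rr ^ 2 * φ W₀.a₂ + rr ^ 3 = (↑u : Kv) ^ 6 * E.a₆ := by
    have h' := congrArg WeierstrassCurve.a₆ hE
    rw [variableChange_a₆, map_a₆, map_a₄, map_a₃, hW₀3, map_zero, map_a₂, map_a₁, hW₀1,
      map_zero, htt] at h'
    linear_combination (↑u : Kv) ^ 6 * h'
      - ((φ W₀.a₆ + rr * φ W₀.a₄ + rr ^ 2 * φ W₀.a₂ + rr ^ 3) * ((↑u : Kv) ^ 5 * (↑u⁻¹ : Kv) ^ 5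
        + (↑u : Kv) ^ 4 * (↑u⁻¹ : Kv) ^ 4 + (↑u : Kv) ^ 3 * (↑u⁻¹ : Kv) ^ 3
        + (↑u : Kv) ^ 2 * (↑u⁻¹ : Kv) ^ 2 + (↑u : Kv) * ↑u⁻¹ + 1)) * huu
  -- descend the 2-torsion x-coordinate to R
  obtain ⟨τ', hτ'def⟩ : ∃ z : Kv, z = (↑u : Kv) ^ 2 * t + rr := ⟨_, rfl⟩
  have hτ'cubic : τ' ^ 3 + φ W₀.a₂ * τ' ^ 2 + φ W₀.a₄ * τ' + φ W₀.a₆ = 0 := by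
    linear_combination (↑u : Kv) ^ 6 * ht + ((↑u : Kv) ^ 4 * t ^ 2) * hA +
      ((↑u : Kv) ^ 2 * t) * hB + hC6 +
      (τ' ^ 2 + τ' * ((↑u : Kv) ^ 2 * t + rr) + ((↑u : Kv) ^ 2 * t + rr) ^ 2
        + φ W₀.a₂ * (τ' + ((↑u : Kv) ^ 2 * t + rr)) + φ W₀.a₄) * hτ'def
  obtain ⟨τ, hτ⟩ := exists_of_cubic hτ'cubic
  have hfτR : τ ^ 3 + W₀.a₂ * τ ^ 2 + W₀.a₄ * τ + W₀.a₆ = 0 := by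
    apply hinj
    rw [map_add, map_add, map_add, map_mul, map_mul, map_pow, map_pow, map_zero, hτ]
    exact hτ'cubic
  -- descend the square root to R
  obtain ⟨ρ₀, hρ₀def⟩ : ∃ z : Kv, z = (↑u : Kv) ^ 2 * ρ := ⟨_, rfl⟩
  have hρ₀sq : ρ₀ ^ 2 = φ (3 * τ ^ 2 + 2 * W₀.a₂ * τ + W₀.a₄) := by
    have him : φ (3 * τ ^ 2 + 2 * W₀.a₂ * τ + W₀.a₄)
        = 3 * τ' ^ 2 + 2 * φ W₀.a₂ * τ' + φ W₀.a₄ := by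
      simp only [map_add, map_mul, map_pow, map_ofNat, hφ, hτ]
    rw [him]
    linear_combination (↑u : Kv) ^ 4 * hρsq - 2 * (↑u : Kv) ^ 2 * t * hA - hB +
      (ρ₀ + (↑u : Kv) ^ 2 * ρ) * hρ₀def -
      (3 * (τ' + ((↑u : Kv) ^ 2 * t + rr)) + 2 * φ W₀.a₂) * hτ'def
  obtain ⟨ρ', hρ'map⟩ := exists_of_sq hρ₀sq
  have hρ'sq : ρ' ^ 2 = 3 * τ ^ 2 + 2 * W₀.a₂ * τ + W₀.a₄ := by
    apply hinj
    rw [map_pow, hρ'map]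
    exact hρ₀sq
  -- the unit
  have hΔeq := delta_aux W₀ hW₀1 hW₀3 hfτR
  have hD'u : IsUnit (W₀.a₂ ^ 2 - 2 * W₀.a₂ * τ - 3 * τ ^ 2 - 4 * W₀.a₄) := by
    rw [hΔeq] at hW₀Δ
    exact isUnit_of_mul_isUnit_right hW₀Δ
  have hA₀u : IsUnit (2 * ρ' + (3 * τ + W₀.a₂)) := by
    apply isUnit_of_mul_isUnit_left (y := (3 * τ + W₀.a₂) - 2 * ρ')
    have hfact : (2 * ρ' + (3 * τ + W₀.a₂)) * ((3 * τ + W₀.a₂) - 2 * ρ')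
        = W₀.a₂ ^ 2 - 2 * W₀.a₂ * τ - 3 * τ ^ 2 - 4 * W₀.a₄ := by
      linear_combination (-4 : R) * hρ'sq
    rw [hfact]
    exact hD'u
  -- relate the twisted square to the unit
  have hαeq : (↑u : Kv) ^ 2 * (2 * ρ + (3 * t + E.a₂)) = φ (2 * ρ' + (3 * τ + W₀.a₂)) := by
    have him : φ (2 * ρ' + (3 * τ + W₀.a₂)) = 2 * ρ₀ + (3 * τ' + φ W₀.a₂) := by
      simp only [map_add, map_mul, map_ofNat, hφ, hρ'map, hτ]
    rw [him]
    linear_combination -hA - 2 * hρ₀def - 3 * hτ'def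
  -- final contradiction via odd valuation
  obtain ⟨e, he⟩ := hsq
  obtain ⟨c₀, π, u₀, hc₀, hπ, hdram⟩ := hram
  have hdram' : d = c₀ ^ 2 * (φ π * φ ↑u₀) := by rw [hdram, map_mul]
  have hg : (e * ↑u / c₀) ^ 2 = φ (π * (↑u₀ * (2 * ρ' + (3 * τ + W₀.a₂)))) := by
    rw [div_pow, div_eq_iff (pow_ne_zero 2 hc₀), map_mul, map_mul, ← hαeq]
    linear_combination (-(↑u : Kv) ^ 2) * he +
      ((↑u : Kv) ^ 2 * (2 * ρ + (3 * t + E.a₂))) * hdram'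
  obtain ⟨g, hgmap⟩ := exists_of_sq hg
  have hg2 : g ^ 2 = π * (↑u₀ * (2 * ρ' + (3 * τ + W₀.a₂))) := by
    apply hinj
    rw [map_pow, hgmap]
    exact hg
  have hprime : Prime π := hπ.prime
  have hdvdpow : π ∣ g ^ 2 := ⟨↑u₀ * (2 * ρ' + (3 * τ + W₀.a₂)), hg2⟩
  obtain ⟨gg, hgg⟩ := hprime.dvd_of_dvd_pow hdvdpow
  have hcan : π * gg ^ 2 = ↑u₀ * (2 * ρ' + (3 * τ + W₀.a₂)) := by
    apply mul_left_cancel₀ hπ.ne_zero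
    linear_combination hg2 - (g + π * gg) * hgg
  have hunit : IsUnit π := isUnit_of_dvd_unit ⟨gg ^ 2, hcan.symm⟩ (u₀.isUnit.mul hA₀u)
  exact hπ.not_isUnit hunit
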